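/- Let n be a positive integer, C an additive category, E : C^op × C → Ab a biadditive functor, and f• : ⟨X•,δ⟩ → ⟨Y•,ρ⟩ a morphism of E-attached complexes. If a morphism of complexes f′• : X• → Y• is homotopic to f•, then f′• also satisfies (f′^0)_*δ = (f′^{n+1})^*ρ, i.e. f′• is a morphism of E-attached complexes ⟨X•,δ⟩ → ⟨Y•,ρ⟩. -/

import Mathlib

/-!
Basic definitions for the theory of `n`-exangulated categories
(Herschend–Liu–Nakaoka): `(n+2)`-term complexes in an additive category,
morphisms of such complexes, homotopies, and homotopy equivalences.

A complex is recorded as a function `obj : ℕ → C` together with differentials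
`d i : obj i ⟶ obj (i+1)`; only the components in degrees `0, …, n+1`
(and the differentials `d 0, …, d n`) are relevant, which is why all
conditions are imposed only in that range.
-/

open CategoryTheory CategoryTheory.Limits Opposite

universe w v u

namespace NExangulated

variable (C : Type u) [Category.{v} C] [Preadditive C]

/-- An `(n+2)`-term complex `X^0 → X^1 → ⋯ → X^{n+1}` in `C`. -/
structure NComplex (n : ℕ) where
  /-- the objects; only `obj 0, …, obj (n+1)` are relevant -/
  obj : ℕ → C
  /-- the differentials -/
  d : ∀ i : ℕ, obj i ⟶ obj (i + 1)
  /-- `d^{i+1} ∘ d^i = 0` for `0 ≤ i ≤ n-1` -/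
  d_comp_d : ∀ i : ℕ, i + 1 ≤ n → d i ≫ d (i + 1) = 0

variable {C}
variable {n : ℕ}

/-- A morphism of `(n+2)`-term complexes. -/
structure NComplexHom (X Y : NComplex C n) where
  /-- the components; only `f 0, …, f (n+1)` are relevant -/
  f : ∀ i : ℕ, X.obj i ⟶ Y.obj i
  /-- compatibility with the differentials, for `0 ≤ i ≤ n` -/
  comm : ∀ i : ℕ, i ≤ n → f i ≫ Y.d i = X.d i ≫ f (i + 1)

/-- The identity morphism of complexes. -/
def NComplexHom.id (X : NComplex C n) : NComplexHom X X where
  f _ := 𝟙 _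
  comm _ _ := by simp

/-- Composition of morphisms of complexes (in diagrammatic order:
`f.comp g` is `g• ∘ f•`). -/
def NComplexHom.comp {X Y Z : NComplex C n} (f : NComplexHom X Y) (g : NComplexHom Y Z) :
    NComplexHom X Z where
  f i := f.f i ≫ g.f i
  comm i hi := by
    rw [Category.assoc, g.comm i hi, ← Category.assoc, f.comm i hi, Category.assoc]

/-- `φ` is a homotopy from `f` to `g`:  here `φ i : X^{i+1} ⟶ Y^i` plays the role of
the component `φ^{i+1}` (for `0 ≤ i ≤ n`, i.e. `1 ≤ i+1 ≤ n+1`). -/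
def IsHomotopy {X Y : NComplex C n} (f g : NComplexHom X Y)
    (φ : ∀ i : ℕ, X.obj (i + 1) ⟶ Y.obj i) : Prop :=
  (g.f 0 - f.f 0 = X.d 0 ≫ φ 0) ∧
    (∀ i : ℕ, i + 1 ≤ n →
      g.f (i + 1) - f.f (i + 1) = φ i ≫ Y.d i + X.d (i + 1) ≫ φ (i + 1)) ∧
    (g.f (n + 1) - f.f (n + 1) = φ n ≫ Y.d n)

/-- Two morphisms of complexes are homotopic. -/
def Homotopic {X Y : NComplex C n} (f g : NComplexHom X Y) : Prop :=
  ∃ φ, IsHomotopy f g φ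

/-- `g` is a homotopy inverse of `f`. -/
def IsHomotopyInverse {X Y : NComplex C n} (f : NComplexHom X Y) (g : NComplexHom Y X) : Prop :=
  Homotopic (f.comp g) (NComplexHom.id X) ∧ Homotopic (g.comp f) (NComplexHom.id Y)

/-- `f` is a homotopy equivalence of complexes. -/
def IsHomotopyEquiv {X Y : NComplex C n} (f : NComplexHom X Y) : Prop :=
  ∃ g, IsHomotopyInverse f g

/-- Exactness of a two-term sequence of (pointed) sets at the middle term:
the image of `f` equals the kernel of `g`. -/
def ExactAt {α β γ : Type*} [Zero γ] (f : α → β) (g : β → γ) : Prop :=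
  ∀ b : β, g b = 0 ↔ ∃ a : α, f a = b

end NExangulated
namespace NExangulated

variable {C : Type u} [Category.{v} C] [Preadditive C] {n : ℕ}

section E

variable (E : Cᵒᵖ ⥤ C ⥤ AddCommGrpCat.{w})

/-- `a_*δ := E(id, a)(δ)`. -/
def pushE {A A' B : C} (a : A ⟶ A') (δ : (E.obj (op B)).obj A) : (E.obj (op B)).obj A' :=
  (E.obj (op B)).map a δ

/-- `c^*δ := E(c, id)(δ)`. -/
def pullE {A B B' : C} (c : B' ⟶ B) (δ : (E.obj (op B)).obj A) : (E.obj (op B')).obj A :=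
  (E.map c.op).app A δ

/-- `⟨X, δ⟩` is an `E`-attached complex: `(d^0)_*δ = 0` and `(d^n)^*δ = 0`. -/
def IsAttached (X : NComplex C n) (δ : (E.obj (op (X.obj (n + 1)))).obj (X.obj 0)) : Prop :=
  pushE E (X.d 0) δ = 0 ∧ pullE E (X.d n) δ = 0

/-- `⟨X, δ⟩` is an `n`-exangle: for every object `Q` the two induced sequences of
abelian groups
`C(Q,X^0) → ⋯ → C(Q,X^{n+1}) → E(Q,X^0)` and
`C(X^{n+1},Q) → ⋯ → C(X^0,Q) → E(X^{n+1},Q)`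
are exact at every term having both an incoming and an outgoing map. -/
def IsExangle (X : NComplex C n) (δ : (E.obj (op (X.obj (n + 1)))).obj (X.obj 0)) : Prop :=
  (∀ Q : C,
      (∀ i : ℕ, i + 1 ≤ n →
        ExactAt (fun u : Q ⟶ X.obj i => u ≫ X.d i)
          (fun u : Q ⟶ X.obj (i + 1) => u ≫ X.d (i + 1))) ∧
      ExactAt (fun u : Q ⟶ X.obj n => u ≫ X.d n)
        (fun u : Q ⟶ X.obj (n + 1) => pullE E u δ)) ∧
  (∀ Q : C,
      (∀ i : ℕ, i + 1 ≤ n →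
        ExactAt (fun u : X.obj (i + 2) ⟶ Q => X.d (i + 1) ≫ u)
          (fun u : X.obj (i + 1) ⟶ Q => X.d i ≫ u)) ∧
      ExactAt (fun u : X.obj 1 ⟶ Q => X.d 0 ≫ u)
        (fun u : X.obj 0 ⟶ Q => pushE E u δ))

end E

end NExangulated
namespace NExangulated

variable {C : Type u} [Category.{v} C] [Preadditive C] [HasFiniteBiproducts C] {n : ℕ}

/-- If `f• : ⟨X•,δ⟩ → ⟨Y•,ρ⟩` is a morphism of `E`-attached
complexes and `f'• : X• → Y•` is a morphism of complexes homotopic to `f•`,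
then `f'•` satisfies `(f'^0)_*δ = (f'^{n+1})^*ρ` as well. -/
theorem statement_2 (hn : 0 < n) (E : Cᵒᵖ ⥤ C ⥤ AddCommGrpCat.{w})
    [E.Additive] [∀ B : Cᵒᵖ, (E.obj B).Additive]
    (X Y : NComplex C n)
    (δ : (E.obj (op (X.obj (n + 1)))).obj (X.obj 0))
    (ρ : (E.obj (op (Y.obj (n + 1)))).obj (Y.obj 0))
    (hX : IsAttached E X δ) (hY : IsAttached E Y ρ)
    (f f' : NComplexHom X Y)
    (hf : pushE E (f.f 0) δ = pullE E (f.f (n + 1)) ρ)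
    (hff' : Homotopic f f') :
    pushE E (f'.f 0) δ = pullE E (f'.f (n + 1)) ρ := by
  obtain ⟨φ, h0, hmid, hlast⟩ := hff'
  have e0 : f'.f 0 = f.f 0 + X.d 0 ≫ φ 0 := by
    have := sub_eq_iff_eq_add.mp h0; rw [this]; abel
  have e1 : f'.f (n + 1) = f.f (n + 1) + φ n ≫ Y.d n := by
    have := sub_eq_iff_eq_add.mp hlast; rw [this]; abel
  have hpush : pushE E (f'.f 0) δ = pushE E (f.f 0) δ := by
    unfold pushE
    rw [e0, Functor.map_add, Functor.map_comp]
    have hd0 : (E.obj (op (X.obj (n + 1)))).map (X.d 0) δ = 0 := hX.1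
    simp [hd0]
  have hpull : pullE E (f'.f (n + 1)) ρ = pullE E (f.f (n + 1)) ρ := by
    unfold pullE
    rw [e1]
    have : (f.f (n + 1) + φ n ≫ Y.d n).op = (f.f (n + 1)).op + (Y.d n).op ≫ (φ n).op := by
      simp
    rw [this, Functor.map_add, Functor.map_comp]
    have hdn : (E.map (Y.d n).op).app (Y.obj 0) ρ = 0 := hY.2
    simp [hdn]
  rw [hpush, hpull, hf]

end NExangulated
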